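/- Let m be a natural number with m > 4, let D_1,…,D_m be positive reals, fix i ∈ {1,…,m}, and let y_1,…,y_m be real numbers. Then ∫_0^∞ t₂(A)·(A+D_i)²·A·exp(y_i²/(A+D_i))·(∏_{j=1}^m (A+D_j)^{−1/2})·exp(−(1/2)·Σ_{j=1}^m y_j²/(A+D_j)) dA < ∞. (This is the propriety claim of Proposition 2 of the paper: for the two-level model without covariates, the matching prior π_{i;sp}(A) ∝ tr[V^{−2}](A+D_i)²·A·exp(y_i²/(A+D_i)) yields a proper posterior whenever m > 4.) -/

import Mathlib

open Finset MeasureTheory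

/-- propriety claim of Proposition 2 of the paper. For the
two-level model without covariates, the matching prior
`tr[V⁻²]·(A+Dᵢ)²·A·exp(yᵢ²/(A+Dᵢ))` yields a proper posterior when `m > 4`. -/
theorem matching_prior_no_covariates_propriety
    (m : ℕ) (hm : 4 < m)
    (D : Fin m → ℝ) (hD : ∀ u, 0 < D u) (i : Fin m)
    (y : Fin m → ℝ) :
    IntegrableOn
      (fun A : ℝ =>
        (∑ u : Fin m, ((A + D u) ^ 2)⁻¹) * (A + D i) ^ 2 * A
          * Real.exp (y i ^ 2 / (A + D i))
          * (∏ j : Fin m, (A + D j) ^ (-(1 : ℝ) / 2))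
          * Real.exp (-(1 / 2) * ∑ j : Fin m, y j ^ 2 / (A + D j)))
      (Set.Ioi (0 : ℝ)) := by
  have hm5 : (5 : ℝ) ≤ (m : ℝ) := by exact_mod_cast hm
  have hmpos : (0 : ℝ) < (m : ℝ) := by linarith
  obtain ⟨δ, hδpos, hδle⟩ : ∃ δ : ℝ, 0 < δ ∧ ∀ u, δ ≤ D u := by
    have hne : (Finset.univ : Finset (Fin m)).Nonempty := ⟨i, Finset.mem_univ i⟩
    refine ⟨Finset.univ.inf' hne D, ?_, fun u => Finset.inf'_le _ (Finset.mem_univ u)⟩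
    obtain ⟨u, -, hu⟩ := Finset.exists_mem_eq_inf' hne D
    rw [hu]; exact hD u
  set r : ℝ := 1 - (m : ℝ) / 2 with hr
  have hrlt : r < -1 := by rw [hr]; linarith
  have hrle : r ≤ 0 := by linarith
  set C : ℝ := (m : ℝ) * (D i / δ) ^ 2 * Real.exp (y i ^ 2 / D i) with hC
  have hCpos : 0 < C := by
    exact mul_pos (mul_pos hmpos (pow_pos (div_pos (hD i) hδpos) 2)) (Real.exp_pos _)
  set f : ℝ → ℝ := fun A : ℝ =>
        (∑ u : Fin m, ((A + D u) ^ 2)⁻¹) * (A + D i) ^ 2 * A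
          * Real.exp (y i ^ 2 / (A + D i))
          * (∏ j : Fin m, (A + D j) ^ (-(1 : ℝ) / 2))
          * Real.exp (-(1 / 2) * ∑ j : Fin m, y j ^ 2 / (A + D j)) with hf
  set g : ℝ → ℝ := fun A : ℝ => C * (A + δ) ^ r with hg
  -- pointwise bounds
  have key : ∀ A ∈ Set.Ioi (0 : ℝ), 0 ≤ f A ∧ f A ≤ g A := by
    intro A hA
    have hA0 : 0 < A := hA
    have hB : 0 < A + δ := by linarith
    have hBle : ∀ u, A + δ ≤ A + D u := fun u => by have := hδle u; linarith
    have hADi : 0 < A + D i := lt_of_lt_of_le hB (hBle i)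
    have hADu : ∀ u, 0 < A + D u := fun u => lt_of_lt_of_le hB (hBle u)
    have hS0 : 0 ≤ ∑ u : Fin m, ((A + D u) ^ 2)⁻¹ := by
      apply Finset.sum_nonneg; intro u _; positivity
    have hPr0 : 0 ≤ ∏ j : Fin m, (A + D j) ^ (-(1 : ℝ) / 2) := by
      apply Finset.prod_nonneg; intro j _; exact Real.rpow_nonneg (hADu j).le _
    constructor
    · exact mul_nonneg (mul_nonneg (mul_nonneg (mul_nonneg
        (mul_nonneg hS0 (sq_nonneg _)) hA0.le) (Real.exp_pos _).le) hPr0)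
        (Real.exp_pos _).le
    -- main estimate
    have h1 : ∑ u : Fin m, ((A + D u) ^ 2)⁻¹ ≤ (m : ℝ) * ((A + δ) ^ 2)⁻¹ := by
      calc ∑ u : Fin m, ((A + D u) ^ 2)⁻¹
          ≤ ∑ _u : Fin m, ((A + δ) ^ 2)⁻¹ := by
            apply Finset.sum_le_sum; intro u _
            apply inv_anti₀ (by positivity)
            exact pow_le_pow_left₀ hB.le (hBle u) 2
        _ = (m : ℝ) * ((A + δ) ^ 2)⁻¹ := by
            rw [Finset.sum_const, Finset.card_univ, Fintype.card_fin, nsmul_eq_mul]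
    have h2 : (A + D i) ^ 2 ≤ (D i / δ * (A + δ)) ^ 2 := by
      apply pow_le_pow_left₀ hADi.le
      rw [div_mul_eq_mul_div, le_div_iff₀ hδpos]
      have hi := hδle i
      nlinarith
    have h4 : Real.exp (y i ^ 2 / (A + D i)) ≤ Real.exp (y i ^ 2 / D i) := by
      apply Real.exp_le_exp.mpr
      apply div_le_div_of_nonneg_left (sq_nonneg _) (hD i)
      linarith [hδle i]
    have h5 : ∏ j : Fin m, (A + D j) ^ (-(1 : ℝ) / 2) ≤ (A + δ) ^ (-(m : ℝ) / 2) := by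
      calc ∏ j : Fin m, (A + D j) ^ (-(1 : ℝ) / 2)
          ≤ ∏ _j : Fin m, (A + δ) ^ (-(1 : ℝ) / 2) := by
            apply Finset.prod_le_prod
            · intro j _; exact Real.rpow_nonneg (hADu j).le _
            · intro j _; exact Real.rpow_le_rpow_of_nonpos hB (hBle j) (by norm_num)
        _ = (A + δ) ^ (-(m : ℝ) / 2) := by
            rw [Finset.prod_const, Finset.card_univ, Fintype.card_fin,
              ← Real.rpow_natCast ((A + δ) ^ (-(1 : ℝ) / 2)) m,
              ← Real.rpow_mul hB.le]
            ring_nf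
    have h6 : Real.exp (-(1 / 2) * ∑ j : Fin m, y j ^ 2 / (A + D j)) ≤ 1 := by
      apply Real.exp_le_one_iff.mpr
      apply mul_nonpos_of_nonpos_of_nonneg (by norm_num)
      apply Finset.sum_nonneg; intro j _
      exact div_nonneg (sq_nonneg _) (hADu j).le
    have hb1 : (0:ℝ) ≤ (m : ℝ) * ((A + δ) ^ 2)⁻¹ * (D i / δ * (A + δ)) ^ 2 :=
      mul_nonneg (mul_nonneg hmpos.le (inv_nonneg.mpr (sq_nonneg _))) (sq_nonneg _)
    have hb2 : (0:ℝ) ≤ (m : ℝ) * ((A + δ) ^ 2)⁻¹ * (D i / δ * (A + δ)) ^ 2 * (A + δ) :=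
      mul_nonneg hb1 hB.le
    have hb3 : (0:ℝ) ≤ (m : ℝ) * ((A + δ) ^ 2)⁻¹ * (D i / δ * (A + δ)) ^ 2 * (A + δ)
        * Real.exp (y i ^ 2 / D i) := mul_nonneg hb2 (Real.exp_pos _).le
    have hb4 : (0:ℝ) ≤ (m : ℝ) * ((A + δ) ^ 2)⁻¹ * (D i / δ * (A + δ)) ^ 2 * (A + δ)
        * Real.exp (y i ^ 2 / D i) * ((A + δ) ^ (-(m : ℝ) / 2)) :=
      mul_nonneg hb3 (Real.rpow_nonneg hB.le _)
    have s1 := mul_le_mul h1 h2 (sq_nonneg _) (mul_nonneg hmpos.le (inv_nonneg.mpr (sq_nonneg _)))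
    have s2 := mul_le_mul s1 (by linarith : A ≤ A + δ) hA0.le hb1
    have s3 := mul_le_mul s2 h4 (Real.exp_pos _).le hb2
    have s4 := mul_le_mul s3 h5 hPr0 hb3
    have step := mul_le_mul s4 h6 (Real.exp_pos _).le hb4
    refine le_trans step (le_of_eq ?_)
    have hBne : A + δ ≠ 0 := ne_of_gt hB
    have hsplit : (A + δ) * (A + δ) ^ (-(m : ℝ) / 2) = (A + δ) ^ r := by
      rw [hr]
      have h15 : (1 : ℝ) - (m : ℝ) / 2 = 1 + (-(m : ℝ) / 2) := by ring
      rw [h15, Real.rpow_add hB, Real.rpow_one]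
    have e1 : ((A + δ) ^ 2)⁻¹ * (A + δ) ^ 2 = 1 := inv_mul_cancel₀ (pow_ne_zero 2 hBne)
    calc (m : ℝ) * ((A + δ) ^ 2)⁻¹ * (D i / δ * (A + δ)) ^ 2 * (A + δ)
          * Real.exp (y i ^ 2 / D i) * ((A + δ) ^ (-(m : ℝ) / 2)) * 1
        = ((m : ℝ) * (D i / δ) ^ 2 * Real.exp (y i ^ 2 / D i))
            * (((A + δ) ^ 2)⁻¹ * (A + δ) ^ 2)
            * ((A + δ) * (A + δ) ^ (-(m : ℝ) / 2)) := by ring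
      _ = C * (A + δ) ^ r := by rw [e1, hsplit, hC, mul_one]
      _ = g A := rfl
  -- integrability of the dominating function
  have hgint : IntegrableOn g (Set.Ioi (0 : ℝ)) := by
    have hcontg : ∀ s : Set ℝ, (∀ x ∈ s, 0 ≤ x) → ContinuousOn g s := by
      intro s hs
      apply continuousOn_const.mul
      apply ContinuousOn.rpow_const ((continuous_add_right δ).continuousOn)
      intro x hx
      exact Or.inl (ne_of_gt (by have := hs x hx; linarith))
    have h01 : IntegrableOn g (Set.Ioc (0 : ℝ) 1) := by
      apply (ContinuousOn.integrableOn_Icc (hcontg _ ?_)).mono_set Set.Ioc_subset_Icc_self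
      intro x hx; exact hx.1
    have h1i : IntegrableOn g (Set.Ioi (1 : ℝ)) := by
      have hdom : IntegrableOn (fun A : ℝ => C * A ^ r) (Set.Ioi (1 : ℝ)) :=
        (integrableOn_Ioi_rpow_of_lt hrlt one_pos).const_mul C
      apply Integrable.mono' hdom
      · exact (hcontg _ (fun x hx => by have : (1:ℝ) < x := hx; linarith)).aestronglyMeasurable
          measurableSet_Ioi
      · filter_upwards [ae_restrict_mem measurableSet_Ioi] with x hx
        have hx1 : (1 : ℝ) < x := hx
        have hx0 : (0 : ℝ) < x := by linarith
        have hB : 0 < x + δ := by linarith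
        rw [hg, Real.norm_eq_abs, abs_of_nonneg (by positivity)]
        exact mul_le_mul_of_nonneg_left
          (Real.rpow_le_rpow_of_nonpos hx0 (by linarith) hrle) hCpos.le
    have : Set.Ioi (0 : ℝ) = Set.Ioc (0 : ℝ) 1 ∪ Set.Ioi 1 :=
      (Set.Ioc_union_Ioi_eq_Ioi zero_le_one).symm
    rw [this]
    exact h01.union h1i
  -- measurability of f
  have hmeas : AEStronglyMeasurable f (volume.restrict (Set.Ioi (0 : ℝ))) := by
    apply ContinuousOn.aestronglyMeasurable _ measurableSet_Ioi
    have hne : ∀ (j : Fin m), ∀ x ∈ Set.Ioi (0 : ℝ), x + D j ≠ 0 := by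
      intro j x hx
      have : (0 : ℝ) < x := hx
      have := hD j
      positivity
    apply ContinuousOn.mul
    apply ContinuousOn.mul
    apply ContinuousOn.mul
    apply ContinuousOn.mul
    apply ContinuousOn.mul
    · apply continuousOn_finset_sum
      intro u _
      exact ContinuousOn.inv₀ (((continuous_add_right (D u)).pow 2).continuousOn)
        (fun x hx => pow_ne_zero 2 (hne u x hx))
    · exact ((continuous_add_right (D i)).pow 2).continuousOn
    · exact continuous_id.continuousOn
    · apply ContinuousOn.rexp
      exact ContinuousOn.div continuousOn_const ((continuous_add_right (D i)).continuousOn)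
        (hne i)
    · apply continuousOn_finset_prod
      intro j _
      exact ContinuousOn.rpow_const ((continuous_add_right (D j)).continuousOn)
        (fun x hx => Or.inl (hne j x hx))
    · apply ContinuousOn.rexp
      apply ContinuousOn.mul continuousOn_const
      apply continuousOn_finset_sum
      intro j _
      exact ContinuousOn.div continuousOn_const ((continuous_add_right (D j)).continuousOn)
        (hne j)
  -- conclude by domination
  apply Integrable.mono' hgint hmeas
  filter_upwards [ae_restrict_mem measurableSet_Ioi] with x hx
  obtain ⟨h0, h1⟩ := key x hx
  rw [Real.norm_eq_abs, abs_of_nonneg h0]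
  exact h1
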